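/- arXiv:1102.0873 — 3 statements merged into one kernel-verified Lean document; each statement's English description precedes it below -/
import Mathlib

section
/- For every 4×4 upper unitriangular complex matrix x (ones on the diagonal, zeros below the diagonal), the determinant of the 2×2 submatrix of x with rows {1,3} and columns {3,4} equals x_{12} times the determinant of the 3×3 submatrix with rows {1,2,3} and columns {1,3,4}, minus the determinant of the 3×3 submatrix with rows {1,2,3} and columns {2,3,4}. -/
/-- For every 4×4 upper unitriangular complex matrix `x`, the minor with
rows `{1,3}` and columns `{3,4}` equals `x₁₂` times the minor with rows `{1,2,3}` and
columns `{1,3,4}`, minus the minor with rows `{1,2,3}` and columns `{2,3,4}`.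
(Indices are 0-based in the formalization: rows `{1,3}` are `![0,2]`, etc.) -/
theorem minor_13_34_eq
    (x : Matrix (Fin 4) (Fin 4) ℂ)
    (hdiag : ∀ i, x i i = 1)
    (hlow : ∀ i j : Fin 4, j < i → x i j = 0) :
    (x.submatrix ![0, 2] ![2, 3]).det =
      x 0 1 * (x.submatrix ![0, 1, 2] ![0, 2, 3]).det -
        (x.submatrix ![0, 1, 2] ![1, 2, 3]).det := by
  rw [Matrix.det_fin_two, Matrix.det_fin_three, Matrix.det_fin_three]
  simp [Matrix.det_fin_two, Matrix.det_fin_three, Matrix.submatrix_apply,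
    hdiag, hlow 1 0 (by decide), hlow 2 0 (by decide), hlow 2 1 (by decide),
    hlow 3 0 (by decide), hlow 3 1 (by decide), hlow 3 2 (by decide),
    Matrix.vecHead, Matrix.vecTail]
  ring
end

section
/- Let n be the 4×4 upper unitriangular real matrix with above-diagonal entries n_{12}, n_{13}, n_{14}, n_{24}, n_{34} and n_{23} = 0, and for i = 1,2,3 set x_i(t) := I + t·E_{i,i+1}. Then the following are equivalent: (a) there exist t ∈ ℝ and t_1,…,t_6 > 0 such that x_2(t)·n = x_2(t_1)x_1(t_2)x_3(t_3)x_2(t_4)x_1(t_5)x_3(t_6); (b) n_{34} > 0, n_{12} > 0, n_{14} > 0, n_{13}n_{34} − n_{14} > 0, and n_{14} − n_{13}n_{34} − n_{12}n_{24} > 0. -/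
set_option linter.unreachableTactic false
set_option linter.unusedTactic false

private lemma prod_eq' (t₁ t₂ t₃ t₄ t₅ t₆ : ℝ) :
    (1 + Matrix.single 1 2 t₁) * (1 + Matrix.single 0 1 t₂)
      * (1 + Matrix.single 2 3 t₃) * (1 + Matrix.single 1 2 t₄)
      * (1 + Matrix.single 0 1 t₅) * (1 + Matrix.single 2 3 t₆)
    = !![1, t₂ + t₅, t₂ * t₄, t₂ * t₄ * t₆;
         0, 1, t₁ + t₄, t₁ * t₃ + (t₁ + t₄) * t₆;
         0, 0, 1, t₃ + t₆;
         0, 0, 0, (1:ℝ)] := by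
  ext i j
  fin_cases i <;> fin_cases j <;>
    simp [Matrix.mul_apply, Fin.sum_univ_four, Matrix.single, Matrix.one_apply,
      Matrix.vecHead, Matrix.vecTail] <;> ring

private lemma lhs_eq' (t n₁₂ n₁₃ n₁₄ n₂₄ n₃₄ : ℝ) :
    (1 + Matrix.single 1 2 t) *
      !![1, n₁₂, n₁₃, n₁₄; 0, 1, 0, n₂₄; 0, 0, 1, n₃₄; 0, 0, 0, 1]
    = !![1, n₁₂, n₁₃, n₁₄; 0, 1, t, n₂₄ + t * n₃₄; 0, 0, 1, n₃₄; 0, 0, 0, (1:ℝ)] := by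
  ext i j
  fin_cases i <;> fin_cases j <;>
    simp [Matrix.mul_apply, Fin.sum_univ_four, Matrix.single, Matrix.one_apply,
      Matrix.vecHead, Matrix.vecTail] <;> ring


/-- Let `n` be the 4×4 upper unitriangular real matrix with
above-diagonal entries `n₁₂, n₁₃, n₁₄, n₂₄, n₃₄` and `n₂₃ = 0`, and
`x_i(t) := I + t·E_{i,i+1}`. The following are equivalent:
(a) there exist `t ∈ ℝ` and `t₁,…,t₆ > 0` with
    `x₂(t)·n = x₂(t₁)x₁(t₂)x₃(t₃)x₂(t₄)x₁(t₅)x₃(t₆)`;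
(b) `n₃₄ > 0`, `n₁₂ > 0`, `n₁₄ > 0`, `n₁₃n₃₄ − n₁₄ > 0` and
    `n₁₄ − n₁₃n₃₄ − n₁₂n₂₄ > 0`. -/
theorem totally_positive_flag_criterion_A3
    (n₁₂ n₁₃ n₁₄ n₂₄ n₃₄ : ℝ) :
    (let x₁ : ℝ → Matrix (Fin 4) (Fin 4) ℝ := fun t => 1 + Matrix.single 0 1 t
     let x₂ : ℝ → Matrix (Fin 4) (Fin 4) ℝ := fun t => 1 + Matrix.single 1 2 t
     let x₃ : ℝ → Matrix (Fin 4) (Fin 4) ℝ := fun t => 1 + Matrix.single 2 3 t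
     let n : Matrix (Fin 4) (Fin 4) ℝ :=
       !![1, n₁₂, n₁₃, n₁₄; 0, 1, 0, n₂₄; 0, 0, 1, n₃₄; 0, 0, 0, 1]
     ∃ t t₁ t₂ t₃ t₄ t₅ t₆ : ℝ, 0 < t₁ ∧ 0 < t₂ ∧ 0 < t₃ ∧ 0 < t₄ ∧ 0 < t₅ ∧ 0 < t₆ ∧
       x₂ t * n = x₂ t₁ * x₁ t₂ * x₃ t₃ * x₂ t₄ * x₁ t₅ * x₃ t₆) ↔
    (0 < n₃₄ ∧ 0 < n₁₂ ∧ 0 < n₁₄ ∧ 0 < n₁₃ * n₃₄ - n₁₄ ∧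
      0 < n₁₄ - n₁₃ * n₃₄ - n₁₂ * n₂₄) := by
  show (∃ t t₁ t₂ t₃ t₄ t₅ t₆ : ℝ, 0 < t₁ ∧ 0 < t₂ ∧ 0 < t₃ ∧ 0 < t₄ ∧ 0 < t₅ ∧ 0 < t₆ ∧
      (1 + Matrix.single 1 2 t) *
        !![1, n₁₂, n₁₃, n₁₄; 0, 1, 0, n₂₄; 0, 0, 1, n₃₄; 0, 0, 0, 1]
      = (1 + Matrix.single 1 2 t₁) * (1 + Matrix.single 0 1 t₂)
        * (1 + Matrix.single 2 3 t₃) * (1 + Matrix.single 1 2 t₄)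
        * (1 + Matrix.single 0 1 t₅) * (1 + Matrix.single 2 3 t₆)) ↔ _
  constructor
  · rintro ⟨t, t₁, t₂, t₃, t₄, t₅, t₆, h₁, h₂, h₃, h₄, h₅, h₆, heq⟩
    rw [lhs_eq', prod_eq'] at heq
    have e01 : n₁₂ = t₂ + t₅ := by simpa using congrFun (congrFun heq 0) 1
    have e02 : n₁₃ = t₂ * t₄ := by simpa using congrFun (congrFun heq 0) 2
    have e03 : n₁₄ = t₂ * t₄ * t₆ := by simpa using congrFun (congrFun heq 0) 3
    have e12 : t = t₁ + t₄ := by simpa using congrFun (congrFun heq 1) 2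
    have e13 : n₂₄ + t * n₃₄ = t₁ * t₃ + (t₁ + t₄) * t₆ := by
      simpa using congrFun (congrFun heq 1) 3
    have e23 : n₃₄ = t₃ + t₆ := by simpa using congrFun (congrFun heq 2) 3
    subst e01 e02 e03 e12 e23
    have hn : n₂₄ = -(t₄ * t₃) := by linear_combination e13
    subst hn
    refine ⟨by positivity, by positivity, by positivity,
      by nlinarith [mul_pos (mul_pos h₂ h₄) h₃],
      by nlinarith [mul_pos (mul_pos h₅ h₄) h₃]⟩
  · rintro ⟨hb1, hb2, hb3, hb4, hb5⟩
    have hn13 : 0 < n₁₃ := by nlinarith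
    have hn24 : n₂₄ < 0 := by nlinarith
    have hC : (0:ℝ) < n₁₃ * n₃₄ - n₁₄ := hb4
    refine ⟨1 + (-n₂₄ * n₁₃ / (n₁₃ * n₃₄ - n₁₄)), 1, -(n₁₃ * n₃₄ - n₁₄) / n₂₄,
      (n₁₃ * n₃₄ - n₁₄) / n₁₃, -n₂₄ * n₁₃ / (n₁₃ * n₃₄ - n₁₄),
      -(n₁₄ - n₁₃ * n₃₄ - n₁₂ * n₂₄) / n₂₄, n₁₄ / n₁₃,
      one_pos, div_pos_of_neg_of_neg (by linarith) hn24, div_pos hb4 hn13,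
      div_pos (by nlinarith) hC, div_pos_of_neg_of_neg (by linarith) hn24,
      div_pos hb3 hn13, ?_⟩
    rw [lhs_eq', prod_eq']
    have h13 : n₁₃ ≠ 0 := ne_of_gt hn13
    have h24 : n₂₄ ≠ 0 := ne_of_lt hn24
    have hCne : n₁₃ * n₃₄ - n₁₄ ≠ 0 := ne_of_gt hC
    ext i j
    fin_cases i <;> fin_cases j <;>
      simp [Matrix.vecHead, Matrix.vecTail] <;> field_simp <;> ring
end

section
/- Let n be the 4×4 real matrix with rows (1,1,1,2), (0,1,0,−1), (0,0,1,1), (0,0,0,1), and for i = 1,2,3 set x_i(t) := I + t·E_{i,i+1}. Then the six Plücker minors of n — the entries (1,2), (1,3), (1,4), and the 3×3 minors with rows {1,2,3} and columns {1,2,4}, {1,3,4}, {2,3,4} respectively — are all positive, and yet for every t ∈ ℝ and all t_1,…,t_6 > 0 one has x_2(t)·n ≠ x_2(t_1)x_1(t_2)x_3(t_3)x_2(t_4)x_1(t_5)x_3(t_6). (Hence the flag π_K(n) has all Plücker coordinates positive but is not totally positive.) -/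
/-- The 4×4 matrix with rows `(1,1,1,2), (0,1,0,−1), (0,0,1,1), (0,0,0,1)`
has all six Plücker minors positive — the entries `(1,2)`, `(1,3)`, `(1,4)` and the 3×3
minors with rows `{1,2,3}` and columns `{1,2,4}`, `{1,3,4}`, `{2,3,4}` — and yet for every
`t ∈ ℝ` and all `t₁,…,t₆ > 0`,
`x₂(t)·n ≠ x₂(t₁)x₁(t₂)x₃(t₃)x₂(t₄)x₁(t₅)x₃(t₆)`, where `x_i(t) := I + t·E_{i,i+1}`.
(Hence the corresponding flag has positive Plücker coordinates but is not totally
positive.  Indices are 0-based in the formalization.) -/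
theorem pluecker_positive_but_not_totally_positive :
    let x₁ : ℝ → Matrix (Fin 4) (Fin 4) ℝ := fun t => 1 + Matrix.single 0 1 t
    let x₂ : ℝ → Matrix (Fin 4) (Fin 4) ℝ := fun t => 1 + Matrix.single 1 2 t
    let x₃ : ℝ → Matrix (Fin 4) (Fin 4) ℝ := fun t => 1 + Matrix.single 2 3 t
    let n : Matrix (Fin 4) (Fin 4) ℝ :=
      !![1, 1, 1, 2; 0, 1, 0, -1; 0, 0, 1, 1; 0, 0, 0, 1]
    (0 < n 0 1 ∧ 0 < n 0 2 ∧ 0 < n 0 3 ∧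
      0 < (n.submatrix ![0, 1, 2] ![0, 1, 3]).det ∧
      0 < (n.submatrix ![0, 1, 2] ![0, 2, 3]).det ∧
      0 < (n.submatrix ![0, 1, 2] ![1, 2, 3]).det) ∧
    ∀ t t₁ t₂ t₃ t₄ t₅ t₆ : ℝ, 0 < t₁ → 0 < t₂ → 0 < t₃ → 0 < t₄ → 0 < t₅ → 0 < t₆ →
      x₂ t * n ≠ x₂ t₁ * x₁ t₂ * x₃ t₃ * x₂ t₄ * x₁ t₅ * x₃ t₆ := by
  intro x₁ x₂ x₃ n
  constructor
  · refine ⟨by norm_num [n], by norm_num [n, Matrix.cons_val_two], by norm_num [n, Matrix.cons_val_three], ?_, ?_, ?_⟩ <;>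
      rw [Matrix.det_fin_three] <;>
      norm_num [n, Matrix.det_fin_three, Matrix.submatrix_apply, Matrix.vecHead, Matrix.vecTail, Matrix.cons_val_two, Matrix.cons_val_three]
  · intro t t₁ t₂ t₃ t₄ t₅ t₆ h1 h2 h3 h4 h5 h6 h
    have h02 := congrFun (congrFun h 0) 2
    have h03 := congrFun (congrFun h 0) 3
    have h23 := congrFun (congrFun h 2) 3
    simp [x₁, x₂, x₃, n, Matrix.mul_apply, Fin.sum_univ_four, Matrix.single,
      Matrix.one_apply, Matrix.add_apply] at h02 h03 h23
    nlinarith [mul_pos h2 h4, mul_pos (mul_pos h2 h4) h6]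
end
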